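/- The system of three quad-equations for (dRTL+ l), namely (I): h(XY+UV)+YV−(1−hλ)XV+h²XU=0, (II): α(XY+UV)+YV−(1−αλ)XV+α²XU=0, and (III): (h−α)(XY+UV)+(1−αλ)YV−(1−hλ)XV+h²(1−αλ)XU−α²(1−hλ)YU=0, is 3D consistent: placing fields on the vertices of a cube with equation (I) on faces parallel to one coordinate plane, (II) on the second, and (III) on the third, the three values at the vertex (1,1,1) computed from the initial data x, x₁, x₂, x₃ (at the origin and its three neighbors) via the three pairs of side faces coincide. -/
import Mathlib


/-- Quad-equation (I) of system (dRTL+ l), in the vertex order `(X,U,Y,V)`. -/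
def dRTLl_QI (h lam X U Y V : ℂ) : ℂ :=
  h * (X * Y + U * V) + Y * V - (1 - h * lam) * X * V + h ^ 2 * X * U

/-- Quad-equation (II) of system (dRTL+ l). -/
def dRTLl_QII (α lam X U Y V : ℂ) : ℂ :=
  α * (X * Y + U * V) + Y * V - (1 - α * lam) * X * V + α ^ 2 * X * U

/-- Quad-equation (III) of system (dRTL+ l). -/
def dRTLl_QIII (α h lam X U Y V : ℂ) : ℂ :=
  (h - α) * (X * Y + U * V) + (1 - α * lam) * Y * V - (1 - h * lam) * X * V +
    h ^ 2 * (1 - α * lam) * X * U - α ^ 2 * (1 - h * lam) * Y * U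

set_option maxHeartbeats 8000000 in
set_option maxRecDepth 100000 in
/-- 3D consistency of the system of quad-equations for (dRTL+ l):
on the cube with vertices `x, x₁, x₂, x₃, x₁₂, x₁₃, x₂₃, x₁₂₃`, equation (III)
is placed on faces parallel to the (1,2)-coordinate plane, (II) on faces
parallel to the (1,3)-plane, and (I) on faces parallel to the (2,3)-plane
(opposite faces carrying the same equation). If the bottom faces determine
`x₁₂, x₁₃, x₂₃` from the initial data `x, x₁, x₂, x₃`, and `a, b, c` denote the
values at the vertex `(1,1,1)` computed from the three top/side faces (each
face equation being uniquely solvable for its fourth argument, i.e. having a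
nonzero affine coefficient there), then `a = b = c`. -/
theorem dRTLl_system_3D_consistent
    (α h lam x x1 x2 x3 x12 x13 x23 a b c : ℂ)
    -- bottom/side faces determining x12, x13, x23
    (h12 : dRTLl_QIII α h lam x x1 x12 x2 = 0)
    (h13 : dRTLl_QII α lam x13 x1 x x3 = 0)
    (h23 : dRTLl_QI h lam x3 x x2 x23 = 0)
    -- nondegeneracy of the bottom faces in the computed argument
    (n12 : dRTLl_QIII α h lam x x1 1 x2 - dRTLl_QIII α h lam x x1 0 x2 ≠ 0)
    (n13 : dRTLl_QII α lam 1 x1 x x3 - dRTLl_QII α lam 0 x1 x x3 ≠ 0)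
    (n23 : dRTLl_QI h lam x3 x x2 1 - dRTLl_QI h lam x3 x x2 0 ≠ 0)
    -- top/side faces determining the three candidate values at (1,1,1)
    (ha : dRTLl_QIII α h lam x3 x13 a x23 = 0)
    (hb : dRTLl_QII α lam b x12 x2 x23 = 0)
    (hc : dRTLl_QI h lam x13 x1 x12 c = 0)
    -- nondegeneracy of the top faces in the computed argument
    (na : dRTLl_QIII α h lam x3 x13 1 x23 - dRTLl_QIII α h lam x3 x13 0 x23 ≠ 0)
    (nb : dRTLl_QII α lam 1 x12 x2 x23 - dRTLl_QII α lam 0 x12 x2 x23 ≠ 0)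
    (nc : dRTLl_QI h lam x13 x1 x12 1 - dRTLl_QI h lam x13 x1 x12 0 ≠ 0) :
    a = b ∧ b = c := by
  simp only [dRTLl_QI, dRTLl_QII, dRTLl_QIII] at h12 h13 h23 ha hb hc
  have n12' : (x2 + h*x + (-1:ℂ)*α*x + (-1:ℂ)*α*lam*x2 + (-1:ℂ)*α^2*x1 + α^2*h*lam*x1) ≠ 0 := fun e => n12 (by simp only [dRTLl_QIII]; linear_combination e)
  have n13' : ((-1:ℂ)*x3 + α*x + α*lam*x3 + α^2*x1) ≠ 0 := fun e => n13 (by simp only [dRTLl_QII]; linear_combination e)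
  have n23' : ((-1:ℂ)*x3 + x2 + h*x + h*lam*x3) ≠ 0 := fun e => n23 (by simp only [dRTLl_QI]; linear_combination e)
  have na' : (x23 + h*x3 + (-1:ℂ)*α*x3 + (-1:ℂ)*α*lam*x23 + (-1:ℂ)*α^2*x13 + α^2*h*lam*x13) ≠ 0 := fun e => na (by simp only [dRTLl_QIII]; linear_combination e)
  have nb' : ((-1:ℂ)*x23 + α*x2 + α*lam*x23 + α^2*x12) ≠ 0 := fun e => nb (by simp only [dRTLl_QII]; linear_combination e)
  have nc' : ((-1:ℂ)*x13 + x12 + h*x1 + h*lam*x13) ≠ 0 := fun e => nc (by simp only [dRTLl_QI]; linear_combination e)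
  have s0 : (x23 + h*x3 + (-1:ℂ)*α*x3 + (-1:ℂ)*α*lam*x23 + (-1:ℂ)*α^2*x13 + α^2*h*lam*x13) * (((-1:ℂ)*x23 + α*x2 + α*lam*x23 + α^2*x12) * (a - b)) = ((-1:ℂ)*x3*x23^2 + x2*x23^2 + h*x13*x23^2 + h*x2*x3*x23 + h*lam*x3*x23^2 + h^2*x3*x13*x23 + (-1:ℂ)*α*x13*x23^2 + α*x12*x23^2 + α*lam*x3*x23^2 + (-1:ℂ)*α*lam*x2*x23^2 + α*h*x3*x12*x23 + (-1:ℂ)*α*h*x2*x13*x23 + (-1:ℂ)*α*h*lam*x13*x23^2 + (-1:ℂ)*α*h*lam*x2*x3*x23 + (-1:ℂ)*α*h*lam^2*x3*x23^2 + (-1:ℂ)*α*h^2*x2*x3*x13 + (-2:ℂ)*α*h^2*lam*x3*x13*x23 + α^2*lam*x13*x23^2 + (-1:ℂ)*α^2*lam*x12*x23^2 + (-1:ℂ)*α^2*h*x12*x13*x23 + (-1:ℂ)*α^2*h*lam*x3*x12*x23 + α^2*h*lam*x2*x13*x23 + (-1:ℂ)*α^2*h^2*x3*x12*x13 + α^2*h^2*lam*x2*x3*x13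 + α^2*h^2*lam^2*x3*x13*x23 + α^3*h*lam*x12*x13*x23 + α^3*h^2*lam*x3*x12*x13) := by
    linear_combination ((-1:ℂ)*x23 + α*x2 + α*lam*x23 + α^2*x12) * ha - (x23 + h*x3 + (-1:ℂ)*α*x3 + (-1:ℂ)*α*lam*x23 + (-1:ℂ)*α^2*x13 + α^2*h*lam*x13) * hb
  have s1 : ((-1:ℂ)*x3 + x2 + h*x + h*lam*x3)^2 * ((-1:ℂ)*x3*x23^2 + x2*x23^2 + h*x13*x23^2 + h*x2*x3*x23 + h*lam*x3*x23^2 + h^2*x3*x13*x23 + (-1:ℂ)*α*x13*x23^2 + α*x12*x23^2 + α*lam*x3*x23^2 + (-1:ℂ)*α*lam*x2*x23^2 + α*h*x3*x12*x23 + (-1:ℂ)*α*h*x2*x13*x23 + (-1:ℂ)*α*h*lam*x13*x23^2 + (-1:ℂ)*α*h*lam*x2*x3*x23 + (-1:ℂ)*α*h*lam^2*x3*x23^2 + (-1:ℂ)*α*h^2*x2*x3*x13 + (-2:ℂ)*α*h^2*lam*x3*x13*x23 + α^2*lam*x13*x23^2 + (-1:ℂ)*α^2*lam*x12*x23^2 +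 (-1:ℂ)*α^2*h*x12*x13*x23 + (-1:ℂ)*α^2*h*lam*x3*x12*x23 + α^2*h*lam*x2*x13*x23 + (-1:ℂ)*α^2*h^2*x3*x12*x13 + α^2*h^2*lam*x2*x3*x13 + α^2*h^2*lam^2*x3*x13*x23 + α^3*h*lam*x12*x13*x23 + α^3*h^2*lam*x3*x12*x13) = (h^3*x2*x3^3*x13 + (-1:ℂ)*h^3*x*x2*x3^3 + h^4*x*x3^3*x13 + (-1:ℂ)*h^4*x^2*x3^3 + (-1:ℂ)*h^4*lam*x2*x3^3*x13 + h^4*lam*x*x2*x3^3 + (-1:ℂ)*h^5*lam*x*x3^3*x13 + h^5*lam*x^2*x3^3 + (-1:ℂ)*α*h^2*x2*x3^3*x13 + α*h^2*x2*x3^3*x12 + α*h^3*x*x3^3*x12 + (-1:ℂ)*α*h^3*x*x2*x3^2*x13 + (-1:ℂ)*α*h^3*lam*x2*x3^3*x12 + α*h^3*lam*x*x2*x3^3 + (-1:ℂ)*α*h^4*x^2*x3^2*x13 + (-2:ℂ)*α*h^4*lam*x*x3^3*x13 + (-1:ℂ)*α*h^4*lam*x*x3^3*x12 + α*h^4*lam*x*x2*x3^2*x13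 + α*h^4*lam*x^2*x3^3 + α*h^4*lam^2*x2*x3^3*x13 + (-1:ℂ)*α*h^4*lam^2*x*x2*x3^3 + α*h^5*lam*x^2*x3^2*x13 + (2:ℂ)*α*h^5*lam^2*x*x3^3*x13 + (-1:ℂ)*α*h^5*lam^2*x^2*x3^3 + (-1:ℂ)*α^2*h^2*x3^3*x12*x13 + α^2*h^2*x2*x3^2*x12*x13 + α^2*h^2*lam*x2*x3^3*x13 + (-1:ℂ)*α^2*h^2*lam*x2*x3^3*x12 + α^2*h^3*x*x3^2*x12*x13 + (2:ℂ)*α^2*h^3*lam*x3^3*x12*x13 + (-1:ℂ)*α^2*h^3*lam*x2*x3^2*x12*x13 + (-1:ℂ)*α^2*h^3*lam*x*x3^3*x12 + α^2*h^3*lam*x*x2*x3^2*x13 + (-1:ℂ)*α^2*h^3*lam^2*x2*x3^3*x13 + α^2*h^3*lam^2*x2*x3^3*x12 + (-1:ℂ)*α^2*h^4*lam*x*x3^2*x12*x13 + α^2*h^4*lam*x^2*x3^2*x13 + (-1:ℂ)*α^2*h^4*lam^2*x3^3*x12*x13 + α^2*h^4*lam^2*x*x3^3*x13 + α^2*h^4*lam^2*x*x3^3*x12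 + (-1:ℂ)*α^2*h^4*lam^2*x*x2*x3^2*x13 + (-1:ℂ)*α^2*h^5*lam^2*x^2*x3^2*x13 + (-1:ℂ)*α^2*h^5*lam^3*x*x3^3*x13 + α^3*h^2*lam*x3^3*x12*x13 + (-1:ℂ)*α^3*h^2*lam*x2*x3^2*x12*x13 + (-1:ℂ)*α^3*h^3*lam*x*x3^2*x12*x13 + (-2:ℂ)*α^3*h^3*lam^2*x3^3*x12*x13 + α^3*h^3*lam^2*x2*x3^2*x12*x13 + α^3*h^4*lam^2*x*x3^2*x12*x13 + α^3*h^4*lam^3*x3^3*x12*x13) := by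
    linear_combination (x3^2*x23 + (-2:ℂ)*x2*x3*x23 + x2^2*x23 + (-1:ℂ)*h*x3*x13*x23 + h*x2*x13*x23 + (-1:ℂ)*h*x*x3*x23 + h*x*x2*x23 + (-2:ℂ)*h*lam*x3^2*x23 + (2:ℂ)*h*lam*x2*x3*x23 + (-1:ℂ)*h^2*x3^2*x13 + h^2*x*x13*x23 + h^2*x*x3^2 + h^2*lam*x3*x13*x23 + h^2*lam*x*x3*x23 + h^2*lam^2*x3^2*x23 + h^3*lam*x3^2*x13 + (-1:ℂ)*h^3*lam*x*x3^2 + α*x3*x13*x23 + (-1:ℂ)*α*x3*x12*x23 + (-1:ℂ)*α*x2*x13*x23 + α*x2*x12*x23 + (-1:ℂ)*α*lam*x3^2*x23 + (2:ℂ)*α*lam*x2*x3*x23 + (-1:ℂ)*α*lam*x2^2*x23 + (-1:ℂ)*α*h*x3^2*x12 + (2:ℂ)*α*h*x2*x3*x13 + (-1:ℂ)*α*h*x2^2*x13 + (-1:ℂ)*α*h*x*x13*x23 + α*h*x*x12*x23 + α*h*lam*x3*x12*x23 + (-1:ℂ)*α*h*lam*x2*x13*x23 + α*h*lam*x*x3*x23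 + (-1:ℂ)*α*h*lam*x*x2*x23 + (2:ℂ)*α*h*lam^2*x3^2*x23 + (-2:ℂ)*α*h*lam^2*x2*x3*x23 + α*h^2*x*x3*x13 + (-1:ℂ)*α*h^2*x*x2*x13 + (2:ℂ)*α*h^2*lam*x3^2*x13 + α*h^2*lam*x3^2*x12 + (-2:ℂ)*α*h^2*lam*x2*x3*x13 + (-1:ℂ)*α*h^2*lam*x*x13*x23 + (-1:ℂ)*α*h^2*lam*x*x3^2 + (-1:ℂ)*α*h^2*lam^2*x3*x13*x23 + (-1:ℂ)*α*h^2*lam^2*x*x3*x23 + (-1:ℂ)*α*h^2*lam^3*x3^2*x23 + (-1:ℂ)*α*h^3*lam*x*x3*x13 + (-2:ℂ)*α*h^3*lam^2*x3^2*x13 + α*h^3*lam^2*x*x3^2 + (-1:ℂ)*α^2*lam*x3*x13*x23 + α^2*lam*x3*x12*x23 + α^2*lam*x2*x13*x23 + (-1:ℂ)*α^2*lam*x2*x12*x23 + α^2*h*x3*x12*x13 + (-1:ℂ)*α^2*h*x2*x12*x13 + α^2*h*lam*x3^2*x12 + (-2:ℂ)*α^2*h*lam*x2*x3*x13 + α^2*h*lam*x2^2*x13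 + α^2*h*lam*x*x13*x23 + (-1:ℂ)*α^2*h*lam*x*x12*x23 + α^2*h*lam^2*x3*x13*x23 + (-1:ℂ)*α^2*h*lam^2*x3*x12*x23 + (-1:ℂ)*α^2*h^2*x*x12*x13 + (-1:ℂ)*α^2*h^2*lam*x3*x12*x13 + (-1:ℂ)*α^2*h^2*lam*x*x3*x13 + α^2*h^2*lam*x*x2*x13 + (-1:ℂ)*α^2*h^2*lam^2*x3^2*x13 + (-1:ℂ)*α^2*h^2*lam^2*x3^2*x12 + (2:ℂ)*α^2*h^2*lam^2*x2*x3*x13 + α^2*h^3*lam^2*x*x3*x13 + α^2*h^3*lam^3*x3^2*x13 + (-1:ℂ)*α^3*h*lam*x3*x12*x13 + α^3*h*lam*x2*x12*x13 + α^3*h^2*lam*x*x12*x13 + α^3*h^2*lam^2*x3*x12*x13) * h23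
  have s2 : ((-1:ℂ)*x3 + α*x + α*lam*x3 + α^2*x1) * (h^3*x2*x3^3*x13 + (-1:ℂ)*h^3*x*x2*x3^3 + h^4*x*x3^3*x13 + (-1:ℂ)*h^4*x^2*x3^3 + (-1:ℂ)*h^4*lam*x2*x3^3*x13 + h^4*lam*x*x2*x3^3 + (-1:ℂ)*h^5*lam*x*x3^3*x13 + h^5*lam*x^2*x3^3 + (-1:ℂ)*α*h^2*x2*x3^3*x13 + α*h^2*x2*x3^3*x12 + α*h^3*x*x3^3*x12 + (-1:ℂ)*α*h^3*x*x2*x3^2*x13 + (-1:ℂ)*α*h^3*lam*x2*x3^3*x12 + α*h^3*lam*x*x2*x3^3 + (-1:ℂ)*α*h^4*x^2*x3^2*x13 + (-2:ℂ)*α*h^4*lam*x*x3^3*x13 + (-1:ℂ)*α*h^4*lam*x*x3^3*x12 + α*h^4*lam*x*x2*x3^2*x13 + α*h^4*lam*x^2*x3^3 + α*h^4*lam^2*x2*x3^3*x13 + (-1:ℂ)*α*h^4*lam^2*x*x2*x3^3 + α*h^5*lam*x^2*x3^2*x13 + (2:ℂ)*α*h^5*lam^2*x*x3^3*x13 + (-1:ℂ)*α*h^5*lam^2*x^2*x3^3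 + (-1:ℂ)*α^2*h^2*x3^3*x12*x13 + α^2*h^2*x2*x3^2*x12*x13 + α^2*h^2*lam*x2*x3^3*x13 + (-1:ℂ)*α^2*h^2*lam*x2*x3^3*x12 + α^2*h^3*x*x3^2*x12*x13 + (2:ℂ)*α^2*h^3*lam*x3^3*x12*x13 + (-1:ℂ)*α^2*h^3*lam*x2*x3^2*x12*x13 + (-1:ℂ)*α^2*h^3*lam*x*x3^3*x12 + α^2*h^3*lam*x*x2*x3^2*x13 + (-1:ℂ)*α^2*h^3*lam^2*x2*x3^3*x13 + α^2*h^3*lam^2*x2*x3^3*x12 + (-1:ℂ)*α^2*h^4*lam*x*x3^2*x12*x13 + α^2*h^4*lam*x^2*x3^2*x13 + (-1:ℂ)*α^2*h^4*lam^2*x3^3*x12*x13 + α^2*h^4*lam^2*x*x3^3*x13 + α^2*h^4*lam^2*x*x3^3*x12 + (-1:ℂ)*α^2*h^4*lam^2*x*x2*x3^2*x13 + (-1:ℂ)*α^2*h^5*lam^2*x^2*x3^2*x13 + (-1:ℂ)*α^2*h^5*lam^3*x*x3^3*x13 + α^3*h^2*lam*x3^3*x12*x13 + (-1:ℂ)*α^3*h^2*lam*x2*x3^2*x12*x13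 + (-1:ℂ)*α^3*h^3*lam*x*x3^2*x12*x13 + (-2:ℂ)*α^3*h^3*lam^2*x3^3*x12*x13 + α^3*h^3*lam^2*x2*x3^2*x12*x13 + α^3*h^4*lam^2*x*x3^2*x12*x13 + α^3*h^4*lam^3*x3^3*x12*x13) = ((-1:ℂ)*α*h^2*x2*x3^4*x12 + α*h^2*x*x2*x3^4 + (-1:ℂ)*α*h^3*x1*x2*x3^4 + (-1:ℂ)*α*h^3*x*x3^4*x12 + α*h^3*lam*x2*x3^4*x12 + (-2:ℂ)*α*h^3*lam*x*x2*x3^4 + (-1:ℂ)*α*h^4*x*x1*x3^4 + α*h^4*lam*x1*x2*x3^4 + α*h^4*lam*x*x3^4*x12 + α*h^4*lam^2*x*x2*x3^4 + α*h^5*lam*x*x1*x3^4 + α^2*h^2*x1*x2*x3^4 + α^2*h^2*x*x3^4*x12 + (2:ℂ)*α^2*h^2*lam*x2*x3^4*x12 + (-1:ℂ)*α^2*h^2*lam*x*x2*x3^4 + (-2:ℂ)*α^2*h^3*lam^2*x2*x3^4*x12 + (2:ℂ)*α^2*h^3*lam^2*x*x2*x3^4 + (2:ℂ)*α^2*h^4*lam*x*x1*x3^4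 + (-1:ℂ)*α^2*h^4*lam^2*x1*x2*x3^4 + (-1:ℂ)*α^2*h^4*lam^2*x*x3^4*x12 + (-1:ℂ)*α^2*h^4*lam^3*x*x2*x3^4 + (-2:ℂ)*α^2*h^5*lam^2*x*x1*x3^4 + α^3*h^2*x1*x3^4*x12 + (-1:ℂ)*α^3*h^2*lam*x1*x2*x3^4 + (-1:ℂ)*α^3*h^2*lam*x*x3^4*x12 + (-1:ℂ)*α^3*h^2*lam^2*x2*x3^4*x12 + (-2:ℂ)*α^3*h^3*lam*x1*x3^4*x12 + α^3*h^3*lam^2*x1*x2*x3^4 + α^3*h^3*lam^2*x*x3^4*x12 + α^3*h^3*lam^3*x2*x3^4*x12 + α^3*h^4*lam^2*x1*x3^4*x12 + (-1:ℂ)*α^3*h^4*lam^2*x*x1*x3^4 + α^3*h^5*lam^3*x*x1*x3^4 + (-1:ℂ)*α^4*h^2*lam*x1*x3^4*x12 + (2:ℂ)*α^4*h^3*lam^2*x1*x3^4*x12 + (-1:ℂ)*α^4*h^4*lam^3*x1*x3^4*x12) := by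
    linear_combination (h^3*x2*x3^3 + h^4*x*x3^3 + (-1:ℂ)*h^4*lam*x2*x3^3 + (-1:ℂ)*h^5*lam*x*x3^3 + (-1:ℂ)*α*h^2*x2*x3^3 + (-1:ℂ)*α*h^3*x*x2*x3^2 + (-1:ℂ)*α*h^4*x^2*x3^2 + (-2:ℂ)*α*h^4*lam*x*x3^3 + α*h^4*lam*x*x2*x3^2 + α*h^4*lam^2*x2*x3^3 + α*h^5*lam*x^2*x3^2 + (2:ℂ)*α*h^5*lam^2*x*x3^3 + (-1:ℂ)*α^2*h^2*x3^3*x12 + α^2*h^2*x2*x3^2*x12 + α^2*h^2*lam*x2*x3^3 + α^2*h^3*x*x3^2*x12 + (2:ℂ)*α^2*h^3*lam*x3^3*x12 + (-1:ℂ)*α^2*h^3*lam*x2*x3^2*x12 + α^2*h^3*lam*x*x2*x3^2 + (-1:ℂ)*α^2*h^3*lam^2*x2*x3^3 + (-1:ℂ)*α^2*h^4*lam*x*x3^2*x12 + α^2*h^4*lam*x^2*x3^2 + (-1:ℂ)*α^2*h^4*lam^2*x3^3*x12 + α^2*h^4*lam^2*x*x3^3 + (-1:ℂ)*α^2*h^4*lam^2*x*x2*x3^2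 + (-1:ℂ)*α^2*h^5*lam^2*x^2*x3^2 + (-1:ℂ)*α^2*h^5*lam^3*x*x3^3 + α^3*h^2*lam*x3^3*x12 + (-1:ℂ)*α^3*h^2*lam*x2*x3^2*x12 + (-1:ℂ)*α^3*h^3*lam*x*x3^2*x12 + (-2:ℂ)*α^3*h^3*lam^2*x3^3*x12 + α^3*h^3*lam^2*x2*x3^2*x12 + α^3*h^4*lam^2*x*x3^2*x12 + α^3*h^4*lam^3*x3^3*x12) * h13
  have s3 : (x2 + h*x + (-1:ℂ)*α*x + (-1:ℂ)*α*lam*x2 + (-1:ℂ)*α^2*x1 + α^2*h*lam*x1) * ((-1:ℂ)*α*h^2*x2*x3^4*x12 + α*h^2*x*x2*x3^4 + (-1:ℂ)*α*h^3*x1*x2*x3^4 + (-1:ℂ)*α*h^3*x*x3^4*x12 + α*h^3*lam*x2*x3^4*x12 + (-2:ℂ)*α*h^3*lam*x*x2*x3^4 + (-1:ℂ)*α*h^4*x*x1*x3^4 + α*h^4*lam*x1*x2*x3^4 + α*h^4*lam*x*x3^4*x12 + α*h^4*lam^2*x*x2*x3^4 + α*h^5*lam*x*x1*x3^4 + α^2*h^2*x1*x2*x3^4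 + α^2*h^2*x*x3^4*x12 + (2:ℂ)*α^2*h^2*lam*x2*x3^4*x12 + (-1:ℂ)*α^2*h^2*lam*x*x2*x3^4 + (-2:ℂ)*α^2*h^3*lam^2*x2*x3^4*x12 + (2:ℂ)*α^2*h^3*lam^2*x*x2*x3^4 + (2:ℂ)*α^2*h^4*lam*x*x1*x3^4 + (-1:ℂ)*α^2*h^4*lam^2*x1*x2*x3^4 + (-1:ℂ)*α^2*h^4*lam^2*x*x3^4*x12 + (-1:ℂ)*α^2*h^4*lam^3*x*x2*x3^4 + (-2:ℂ)*α^2*h^5*lam^2*x*x1*x3^4 + α^3*h^2*x1*x3^4*x12 + (-1:ℂ)*α^3*h^2*lam*x1*x2*x3^4 + (-1:ℂ)*α^3*h^2*lam*x*x3^4*x12 + (-1:ℂ)*α^3*h^2*lam^2*x2*x3^4*x12 + (-2:ℂ)*α^3*h^3*lam*x1*x3^4*x12 + α^3*h^3*lam^2*x1*x2*x3^4 + α^3*h^3*lam^2*x*x3^4*x12 + α^3*h^3*lam^3*x2*x3^4*x12 + α^3*h^4*lam^2*x1*x3^4*x12 + (-1:ℂ)*α^3*h^4*lam^2*x*x1*x3^4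 + α^3*h^5*lam^3*x*x1*x3^4 + (-1:ℂ)*α^4*h^2*lam*x1*x3^4*x12 + (2:ℂ)*α^4*h^3*lam^2*x1*x3^4*x12 + (-1:ℂ)*α^4*h^4*lam^3*x1*x3^4*x12) = 0 := by
    linear_combination ((-1:ℂ)*α*h^2*x2*x3^4 + (-1:ℂ)*α*h^3*x*x3^4 + α*h^3*lam*x2*x3^4 + α*h^4*lam*x*x3^4 + α^2*h^2*x*x3^4 + (2:ℂ)*α^2*h^2*lam*x2*x3^4 + (-2:ℂ)*α^2*h^3*lam^2*x2*x3^4 + (-1:ℂ)*α^2*h^4*lam^2*x*x3^4 + α^3*h^2*x1*x3^4 + (-1:ℂ)*α^3*h^2*lam*x*x3^4 + (-1:ℂ)*α^3*h^2*lam^2*x2*x3^4 + (-2:ℂ)*α^3*h^3*lam*x1*x3^4 + α^3*h^3*lam^2*x*x3^4 + α^3*h^3*lam^3*x2*x3^4 + α^3*h^4*lam^2*x1*x3^4 + (-1:ℂ)*α^4*h^2*lam*x1*x3^4 + (2:ℂ)*α^4*h^3*lam^2*x1*x3^4 + (-1:ℂ)*α^4*h^4*lam^3*x1*x3^4) * 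h12
  have z : (x2 + h*x + (-1:ℂ)*α*x + (-1:ℂ)*α*lam*x2 + (-1:ℂ)*α^2*x1 + α^2*h*lam*x1) * (((-1:ℂ)*x3 + α*x + α*lam*x3 + α^2*x1) * (((-1:ℂ)*x3 + x2 + h*x + h*lam*x3)^2 * ((x23 + h*x3 + (-1:ℂ)*α*x3 + (-1:ℂ)*α*lam*x23 + (-1:ℂ)*α^2*x13 + α^2*h*lam*x13) * (((-1:ℂ)*x23 + α*x2 + α*lam*x23 + α^2*x12) * (a - b))))) = 0 := by
    rw [s0, s1, s2, s3]
  have e1 := (mul_eq_zero.mp z).resolve_left n12'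
  have e2 := (mul_eq_zero.mp e1).resolve_left n13'
  have e3 := (mul_eq_zero.mp e2).resolve_left (pow_ne_zero 2 n23')
  have e4 := (mul_eq_zero.mp e3).resolve_left na'
  have e5 := (mul_eq_zero.mp e4).resolve_left nb'
  have t0 : ((-1:ℂ)*x23 + α*x2 + α*lam*x23 + α^2*x12) * (((-1:ℂ)*x13 + x12 + h*x1 + h*lam*x13) * (b - c)) = (x2*x13*x23 + (-1:ℂ)*x2*x12*x23 + (-1:ℂ)*h*x12*x13*x23 + (-1:ℂ)*h*x1*x2*x23 + (-1:ℂ)*h*lam*x2*x13*x23 + (-1:ℂ)*h^2*x1*x13*x23 + α*x12*x13*x23 + (-1:ℂ)*α*x12^2*x23 + α*h*x2*x12*x13 + (-1:ℂ)*α*h*x1*x12*x23 + α*h^2*x1*x2*x13 + α*h^2*lam*x1*x13*x23 + α^2*h*x12^2*x13 + α^2*h^2*x1*x12*x13) := by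
    linear_combination ((-1:ℂ)*x13 + x12 + h*x1 + h*lam*x13) * hb - ((-1:ℂ)*x23 + α*x2 + α*lam*x23 + α^2*x12) * hc
  have t1 : ((-1:ℂ)*x3 + α*x + α*lam*x3 + α^2*x1) * (x2*x13*x23 + (-1:ℂ)*x2*x12*x23 + (-1:ℂ)*h*x12*x13*x23 + (-1:ℂ)*h*x1*x2*x23 + (-1:ℂ)*h*lam*x2*x13*x23 + (-1:ℂ)*h^2*x1*x13*x23 + α*x12*x13*x23 + (-1:ℂ)*α*x12^2*x23 + α*h*x2*x12*x13 + (-1:ℂ)*α*h*x1*x12*x23 + α*h^2*x1*x2*x13 + α*h^2*lam*x1*x13*x23 + α^2*h*x12^2*x13 + α^2*h^2*x1*x12*x13) = (x2*x3*x12*x23 + (-1:ℂ)*x*x2*x3*x23 + h*x1*x2*x3*x23 + h*x*x3*x12*x23 + h*lam*x*x2*x3*x23 + h^2*x*x1*x3*x23 + α*x3*x12^2*x23 + (-1:ℂ)*α*x1*x2*x3*x23 + (-1:ℂ)*α*x*x3*x12*x23 + (-1:ℂ)*α*x*x2*x12*x23 + (-1:ℂ)*α*lam*x2*x3*x12*x23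 + (2:ℂ)*α*h*x1*x3*x12*x23 + (-1:ℂ)*α*h*x*x2*x3*x12 + (-1:ℂ)*α*h*x*x1*x2*x23 + α*h^2*x1^2*x3*x23 + (-1:ℂ)*α*h^2*x*x1*x2*x3 + (-1:ℂ)*α*h^2*lam*x*x1*x3*x23 + (-1:ℂ)*α^2*x1*x3*x12*x23 + (-1:ℂ)*α^2*x1*x2*x12*x23 + (-1:ℂ)*α^2*x*x12^2*x23 + (-1:ℂ)*α^2*lam*x3*x12^2*x23 + (-1:ℂ)*α^2*h*x1*x2*x3*x12 + (-1:ℂ)*α^2*h*x1^2*x2*x23 + (-1:ℂ)*α^2*h*x*x3*x12^2 + (-1:ℂ)*α^2*h*x*x1*x12*x23 + (-1:ℂ)*α^2*h*lam*x1*x3*x12*x23 + (-1:ℂ)*α^2*h^2*x1^2*x2*x3 + (-1:ℂ)*α^2*h^2*x*x1*x3*x12 + (-1:ℂ)*α^2*h^2*lam*x1^2*x3*x23 + (-1:ℂ)*α^3*x1*x12^2*x23 + (-1:ℂ)*α^3*h*x1*x3*x12^2 + (-1:ℂ)*α^3*h*x1^2*x12*x23 + (-1:ℂ)*α^3*h^2*x1^2*x3*x12)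 := by
    linear_combination (x2*x23 + (-1:ℂ)*h*x12*x23 + (-1:ℂ)*h*lam*x2*x23 + (-1:ℂ)*h^2*x1*x23 + α*x12*x23 + α*h*x2*x12 + α*h^2*x1*x2 + α*h^2*lam*x1*x23 + α^2*h*x12^2 + α^2*h^2*x1*x12) * h13
  have t2 : ((-1:ℂ)*x3 + x2 + h*x + h*lam*x3) * (x2*x3*x12*x23 + (-1:ℂ)*x*x2*x3*x23 + h*x1*x2*x3*x23 + h*x*x3*x12*x23 + h*lam*x*x2*x3*x23 + h^2*x*x1*x3*x23 + α*x3*x12^2*x23 + (-1:ℂ)*α*x1*x2*x3*x23 + (-1:ℂ)*α*x*x3*x12*x23 + (-1:ℂ)*α*x*x2*x12*x23 + (-1:ℂ)*α*lam*x2*x3*x12*x23 + (2:ℂ)*α*h*x1*x3*x12*x23 + (-1:ℂ)*α*h*x*x2*x3*x12 + (-1:ℂ)*α*h*x*x1*x2*x23 + α*h^2*x1^2*x3*x23 + (-1:ℂ)*α*h^2*x*x1*x2*x3 + (-1:ℂ)*α*h^2*lam*x*x1*x3*x23 + (-1:ℂ)*α^2*x1*x3*x12*x23 + (-1:ℂ)*α^2*x1*x2*x12*x23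 + (-1:ℂ)*α^2*x*x12^2*x23 + (-1:ℂ)*α^2*lam*x3*x12^2*x23 + (-1:ℂ)*α^2*h*x1*x2*x3*x12 + (-1:ℂ)*α^2*h*x1^2*x2*x23 + (-1:ℂ)*α^2*h*x*x3*x12^2 + (-1:ℂ)*α^2*h*x*x1*x12*x23 + (-1:ℂ)*α^2*h*lam*x1*x3*x12*x23 + (-1:ℂ)*α^2*h^2*x1^2*x2*x3 + (-1:ℂ)*α^2*h^2*x*x1*x3*x12 + (-1:ℂ)*α^2*h^2*lam*x1^2*x3*x23 + (-1:ℂ)*α^3*x1*x12^2*x23 + (-1:ℂ)*α^3*h*x1*x3*x12^2 + (-1:ℂ)*α^3*h*x1^2*x12*x23 + (-1:ℂ)*α^3*h^2*x1^2*x3*x12) = ((-1:ℂ)*h*x2^2*x3^2*x12 + h*x*x2^2*x3^2 + (-1:ℂ)*h^2*x1*x2^2*x3^2 + (-2:ℂ)*h^2*x*x2*x3^2*x12 + h^2*x^2*x2*x3^2 + (-1:ℂ)*h^2*lam*x*x2^2*x3^2 + (-2:ℂ)*h^3*x*x1*x2*x3^2 + (-1:ℂ)*h^3*x^2*x3^2*x12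 + (-1:ℂ)*h^3*lam*x^2*x2*x3^2 + (-1:ℂ)*h^4*x^2*x1*x3^2 + (-1:ℂ)*α*h*x2*x3^2*x12^2 + α*h*x1*x2^2*x3^2 + (2:ℂ)*α*h*x*x2*x3^2*x12 + α*h*lam*x2^2*x3^2*x12 + (-2:ℂ)*α*h^2*x1*x2*x3^2*x12 + (-1:ℂ)*α*h^2*x*x3^2*x12^2 + (2:ℂ)*α*h^2*x*x1*x2*x3^2 + α*h^2*x^2*x3^2*x12 + (-1:ℂ)*α*h^3*x1^2*x2*x3^2 + (-2:ℂ)*α*h^3*x*x1*x3^2*x12 + (-1:ℂ)*α*h^4*x*x1^2*x3^2 + α*h^4*lam*x^2*x1*x3^2 + (2:ℂ)*α^2*h*x1*x2*x3^2*x12 + α^2*h*x*x3^2*x12^2 + α^2*h*lam*x2*x3^2*x12^2 + α^2*h^2*x1^2*x2*x3^2 + (2:ℂ)*α^2*h^2*x*x1*x3^2*x12 + α^2*h^4*lam*x*x1^2*x3^2 + α^3*h*x1*x3^2*x12^2 + α^3*h^2*x1^2*x3^2*x12 + (-1:ℂ)*α^3*h^2*lam*x1*x3^2*x12^2 + (-1:ℂ)*α^3*h^3*lam*x1^2*x3^2*x12)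 := by
    linear_combination (x2*x3*x12 + (-1:ℂ)*x*x2*x3 + h*x1*x2*x3 + h*x*x3*x12 + h*lam*x*x2*x3 + h^2*x*x1*x3 + α*x3*x12^2 + (-1:ℂ)*α*x1*x2*x3 + (-1:ℂ)*α*x*x3*x12 + (-1:ℂ)*α*x*x2*x12 + (-1:ℂ)*α*lam*x2*x3*x12 + (2:ℂ)*α*h*x1*x3*x12 + (-1:ℂ)*α*h*x*x1*x2 + α*h^2*x1^2*x3 + (-1:ℂ)*α*h^2*lam*x*x1*x3 + (-1:ℂ)*α^2*x1*x3*x12 + (-1:ℂ)*α^2*x1*x2*x12 + (-1:ℂ)*α^2*x*x12^2 + (-1:ℂ)*α^2*lam*x3*x12^2 + (-1:ℂ)*α^2*h*x1^2*x2 + (-1:ℂ)*α^2*h*x*x1*x12 + (-1:ℂ)*α^2*h*lam*x1*x3*x12 + (-1:ℂ)*α^2*h^2*lam*x1^2*x3 + (-1:ℂ)*α^3*x1*x12^2 + (-1:ℂ)*α^3*h*x1^2*x12) * h23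
  have t3 : (x2 + h*x + (-1:ℂ)*α*x + (-1:ℂ)*α*lam*x2 + (-1:ℂ)*α^2*x1 + α^2*h*lam*x1)^2 * ((-1:ℂ)*h*x2^2*x3^2*x12 + h*x*x2^2*x3^2 + (-1:ℂ)*h^2*x1*x2^2*x3^2 + (-2:ℂ)*h^2*x*x2*x3^2*x12 + h^2*x^2*x2*x3^2 + (-1:ℂ)*h^2*lam*x*x2^2*x3^2 + (-2:ℂ)*h^3*x*x1*x2*x3^2 + (-1:ℂ)*h^3*x^2*x3^2*x12 + (-1:ℂ)*h^3*lam*x^2*x2*x3^2 + (-1:ℂ)*h^4*x^2*x1*x3^2 + (-1:ℂ)*α*h*x2*x3^2*x12^2 + α*h*x1*x2^2*x3^2 + (2:ℂ)*α*h*x*x2*x3^2*x12 + α*h*lam*x2^2*x3^2*x12 + (-2:ℂ)*α*h^2*x1*x2*x3^2*x12 + (-1:ℂ)*α*h^2*x*x3^2*x12^2 + (2:ℂ)*α*h^2*x*x1*x2*x3^2 + α*h^2*x^2*x3^2*x12 + (-1:ℂ)*α*h^3*x1^2*x2*x3^2 + (-2:ℂ)*α*h^3*x*x1*x3^2*x12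 + (-1:ℂ)*α*h^4*x*x1^2*x3^2 + α*h^4*lam*x^2*x1*x3^2 + (2:ℂ)*α^2*h*x1*x2*x3^2*x12 + α^2*h*x*x3^2*x12^2 + α^2*h*lam*x2*x3^2*x12^2 + α^2*h^2*x1^2*x2*x3^2 + (2:ℂ)*α^2*h^2*x*x1*x3^2*x12 + α^2*h^4*lam*x*x1^2*x3^2 + α^3*h*x1*x3^2*x12^2 + α^3*h^2*x1^2*x3^2*x12 + (-1:ℂ)*α^3*h^2*lam*x1*x3^2*x12^2 + (-1:ℂ)*α^3*h^3*lam*x1^2*x3^2*x12) = 0 := by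
    linear_combination ((-1:ℂ)*h*x2^3*x3^2 + (-3:ℂ)*h^2*x*x2^2*x3^2 + (-3:ℂ)*h^3*x^2*x2*x3^2 + (-1:ℂ)*h^4*x^3*x3^2 + (-1:ℂ)*α*h*x2^2*x3^2*x12 + (2:ℂ)*α*h*x*x2^2*x3^2 + (2:ℂ)*α*h*lam*x2^3*x3^2 + (-1:ℂ)*α*h^2*x1*x2^2*x3^2 + (-2:ℂ)*α*h^2*x*x2*x3^2*x12 + (4:ℂ)*α*h^2*x^2*x2*x3^2 + (4:ℂ)*α*h^2*lam*x*x2^2*x3^2 + (-2:ℂ)*α*h^3*x*x1*x2*x3^2 + (-1:ℂ)*α*h^3*x^2*x3^2*x12 + (2:ℂ)*α*h^3*x^3*x3^2 + (2:ℂ)*α*h^3*lam*x^2*x2*x3^2 + (-1:ℂ)*α*h^4*x^2*x1*x3^2 + (2:ℂ)*α^2*h*x1*x2^2*x3^2 + (2:ℂ)*α^2*h*x*x2*x3^2*x12 + (-1:ℂ)*α^2*h*x^2*x2*x3^2 + (2:ℂ)*α^2*h*lam*x2^2*x3^2*x12 + (-2:ℂ)*α^2*h*lam*x*x2^2*x3^2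 + (-1:ℂ)*α^2*h*lam^2*x2^3*x3^2 + (6:ℂ)*α^2*h^2*x*x1*x2*x3^2 + (2:ℂ)*α^2*h^2*x^2*x3^2*x12 + (-1:ℂ)*α^2*h^2*x^3*x3^2 + (2:ℂ)*α^2*h^2*lam*x*x2*x3^2*x12 + (-2:ℂ)*α^2*h^2*lam*x^2*x2*x3^2 + (-1:ℂ)*α^2*h^2*lam^2*x*x2^2*x3^2 + (4:ℂ)*α^2*h^3*x^2*x1*x3^2 + (-2:ℂ)*α^2*h^3*lam*x*x1*x2*x3^2 + (-2:ℂ)*α^2*h^4*lam*x^2*x1*x3^2 + (2:ℂ)*α^3*h*x1*x2*x3^2*x12 + (-2:ℂ)*α^3*h*x*x1*x2*x3^2 + (-1:ℂ)*α^3*h*x^2*x3^2*x12 + (-2:ℂ)*α^3*h*lam*x1*x2^2*x3^2 + (-2:ℂ)*α^3*h*lam*x*x2*x3^2*x12 + (-1:ℂ)*α^3*h*lam^2*x2^2*x3^2*x12 + (2:ℂ)*α^3*h^2*x1^2*x2*x3^2 + (2:ℂ)*α^3*h^2*x*x1*x3^2*x12 + (-3:ℂ)*α^3*h^2*x^2*x1*x3^2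 + (-2:ℂ)*α^3*h^2*lam*x1*x2*x3^2*x12 + (-2:ℂ)*α^3*h^2*lam*x*x1*x2*x3^2 + α^3*h^2*lam^2*x1*x2^2*x3^2 + (2:ℂ)*α^3*h^3*x*x1^2*x3^2 + (-2:ℂ)*α^3*h^3*lam*x1^2*x2*x3^2 + (-2:ℂ)*α^3*h^3*lam*x*x1*x3^2*x12 + (2:ℂ)*α^3*h^3*lam*x^2*x1*x3^2 + (2:ℂ)*α^3*h^3*lam^2*x*x1*x2*x3^2 + (-2:ℂ)*α^3*h^4*lam*x*x1^2*x3^2 + (-1:ℂ)*α^4*h*x1^2*x2*x3^2 + (-2:ℂ)*α^4*h*x*x1*x3^2*x12 + (-2:ℂ)*α^4*h*lam*x1*x2*x3^2*x12 + (-3:ℂ)*α^4*h^2*x*x1^2*x3^2 + (2:ℂ)*α^4*h^2*lam*x*x1*x3^2*x12 + (2:ℂ)*α^4*h^2*lam^2*x1*x2*x3^2*x12 + (4:ℂ)*α^4*h^3*lam*x*x1^2*x3^2 + α^4*h^3*lam^2*x1^2*x2*x3^2 + (-1:ℂ)*α^4*h^4*lam^2*x*x1^2*x3^2 + (-1:ℂ)*α^5*h*x1^2*x3^2*x12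 + (-1:ℂ)*α^5*h^2*x1^3*x3^2 + (2:ℂ)*α^5*h^2*lam*x1^2*x3^2*x12 + (2:ℂ)*α^5*h^3*lam*x1^3*x3^2 + (-1:ℂ)*α^5*h^3*lam^2*x1^2*x3^2*x12 + (-1:ℂ)*α^5*h^4*lam^2*x1^3*x3^2) * h12
  have w : (x2 + h*x + (-1:ℂ)*α*x + (-1:ℂ)*α*lam*x2 + (-1:ℂ)*α^2*x1 + α^2*h*lam*x1)^2 * (((-1:ℂ)*x3 + x2 + h*x + h*lam*x3) * (((-1:ℂ)*x3 + α*x + α*lam*x3 + α^2*x1) * (((-1:ℂ)*x23 + α*x2 + α*lam*x23 + α^2*x12) * (((-1:ℂ)*x13 + x12 + h*x1 + h*lam*x13) * (b - c))))) = 0 := by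
    rw [t0, t1, t2, t3]
  have f1 := (mul_eq_zero.mp w).resolve_left (pow_ne_zero 2 n12')
  have f2 := (mul_eq_zero.mp f1).resolve_left n23'
  have f3 := (mul_eq_zero.mp f2).resolve_left n13'
  have f4 := (mul_eq_zero.mp f3).resolve_left nb'
  have f5 := (mul_eq_zero.mp f4).resolve_left nc'
  exact ⟨sub_eq_zero.mp e5, sub_eq_zero.mp f5⟩
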